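/- Let f be a filter function and A Hermitian with eigenvalues λ_1, …, λ_n. In subspace iteration with subspace dimension m₀ applied to f(A), if |f(λ_{m₀})| > |f(λ_{m₀+1})| (eigenvalues ordered by decreasing |f|), then the acute principal angles θ_k^{(j)} between the j-th iterate subspace and the dominant m₀-dimensional invariant subspace satisfy tan θ_k^{(j)} ≤ (|f(λ_{m₀+1})|/|f(λ_{m₀})|)^j tan θ_k^{(0)}, assuming the initial subspace has all principal angles < π/2. -/

import Mathlib

open Matrix

set_option maxHeartbeats 1000000 in
/-- Tangent-based convergence bound for filtered subspace iteration: with `U` the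
dominant invariant subspace of `f(A)` (span of eigenvectors with the `m₀` largest
values of `|f(λ)|`, with `|f(λ_{m₀})| > |f(λ_{m₀+1})|`) and initial subspace `X₀`
having all principal angles to `U` less than `π/2`, each vector `v` in the iterate
subspaces satisfies the tangent bound
`tan θ(f(A)ʲv) ≤ (|f(λ_{m₀+1})|/|f(λ_{m₀})|)ʲ · tan θ(v)`, stated in product form via
the orthogonal projection onto `U`. -/
theorem stmt_19 {n m₀ : ℕ} (A : Matrix (Fin n) (Fin n) ℂ) (hA : A.IsHermitian)
    (f : ℝ → ℝ) (hm : m₀ < n) (hm0 : 0 < m₀)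
    (hord : ∀ j k : Fin n, j ≤ k → |f (hA.eigenvalues k)| ≤ |f (hA.eigenvalues j)|)
    (hgap : |f (hA.eigenvalues ⟨m₀, hm⟩)| < |f (hA.eigenvalues ⟨m₀ - 1, by omega⟩)|)
    (fA : Matrix (Fin n) (Fin n) ℂ)
    (hfA : fA = ∑ k, (f (hA.eigenvalues k) : ℂ) •
      Matrix.vecMulVec (fun i => hA.eigenvectorBasis k i)
        (fun j => star (hA.eigenvectorBasis k j)))
    (U : Submodule ℂ (EuclideanSpace ℂ (Fin n)))
    (hU : U = Submodule.span ℂ {v | ∃ k : Fin n, (k : ℕ) < m₀ ∧ v = hA.eigenvectorBasis k})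
    (X₀ : Submodule ℂ (EuclideanSpace ℂ (Fin n)))
    (hXdim : Module.finrank ℂ X₀ = m₀)
    (hangle : ∀ v ∈ X₀, v ≠ 0 → U.orthogonalProjectionOnto v ≠ 0) :
    ∀ (j : ℕ), ∀ v ∈ X₀,
      ‖Matrix.toEuclideanLin (fA ^ j) v -
          (U.orthogonalProjectionOnto (Matrix.toEuclideanLin (fA ^ j) v) : EuclideanSpace ℂ (Fin n))‖
        * ‖(U.orthogonalProjectionOnto v : EuclideanSpace ℂ (Fin n))‖
      ≤ (|f (hA.eigenvalues ⟨m₀, hm⟩)| / |f (hA.eigenvalues ⟨m₀ - 1, by omega⟩)|) ^ j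
        * (‖v - (U.orthogonalProjectionOnto v : EuclideanSpace ℂ (Fin n))‖
            * ‖(U.orthogonalProjectionOnto (Matrix.toEuclideanLin (fA ^ j) v) : EuclideanSpace ℂ (Fin n))‖) := by
  classical
  intro j v _
  set e : OrthonormalBasis (Fin n) ℂ (EuclideanSpace ℂ (Fin n)) := hA.eigenvectorBasis with he
  set μ : Fin n → ℝ := fun k => f (hA.eigenvalues k) with hμ
  have horth : Orthonormal ℂ (⇑e) := e.orthonormal
  have hite : ∀ k l : Fin n, (inner ℂ (e k) (e l) : ℂ) = if k = l then 1 else 0 :=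
    orthonormal_iff_ite.mp horth
  have hsum : ∀ (g : Fin n → EuclideanSpace ℂ (Fin n)) (i : Fin n),
      (∑ k, g k) i = ∑ k, g k i := fun g i => by simp
  -- action of fA
  have hact : ∀ w : EuclideanSpace ℂ (Fin n), Matrix.toEuclideanLin fA w
      = ∑ k, ((μ k : ℂ) * inner ℂ (e k) w) • (e k : EuclideanSpace ℂ (Fin n)) := by
    intro w
    ext i
    rw [hsum]
    simp only [toEuclideanLin_apply, hfA, PiLp.inner_apply, RCLike.inner_apply,
      PiLp.smul_apply, smul_eq_mul, mulVec, dotProduct,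
      Matrix.sum_apply, Matrix.smul_apply, vecMulVec_apply, PiLp.toLp_apply,
      WithLp.ofLp_toLp, Finset.sum_mul, Finset.mul_sum, he, hμ]
    rw [Finset.sum_comm]
    exact Finset.sum_congr rfl fun k _ => Finset.sum_congr rfl fun l _ => by
      rw [RCLike.star_def]; ring
  -- action of powers of fA
  have hpow : ∀ (j : ℕ) (w : EuclideanSpace ℂ (Fin n)), Matrix.toEuclideanLin (fA ^ j) w
      = ∑ k, ((μ k : ℂ) ^ j * inner ℂ (e k) w) • (e k : EuclideanSpace ℂ (Fin n)) := by
    intro j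
    induction j with
    | zero =>
      intro w
      simp only [pow_zero, one_mul]
      rw [show Matrix.toEuclideanLin (1 : Matrix (Fin n) (Fin n) ℂ) w = w by
        rw [toEuclideanLin_apply]; simp]
      exact (e.sum_repr' w).symm
    | succ j ih =>
      intro w
      have hcomp : Matrix.toEuclideanLin (fA ^ (j + 1)) w
          = Matrix.toEuclideanLin (fA ^ j) (Matrix.toEuclideanLin fA w) := by
        rw [pow_succ, toEuclideanLin_apply, toEuclideanLin_apply, toEuclideanLin_apply]
        simp [Matrix.mulVec_mulVec]
      rw [hcomp, ih (Matrix.toEuclideanLin fA w)]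
      refine Finset.sum_congr rfl fun k _ => ?_
      rw [hact w, horth.inner_right_fintype (fun l => (μ l : ℂ) * inner ℂ (e l) w) k]
      ring_nf
  -- projection formula
  set s : Finset (Fin n) := Finset.univ.filter (fun k => (k : ℕ) < m₀) with hs
  have hmemU : ∀ k ∈ s, (e k : EuclideanSpace ℂ (Fin n)) ∈ U := by
    intro k hk
    rw [hU]
    exact Submodule.subset_span ⟨k, (Finset.mem_filter.mp hk).2, rfl⟩
  have hproj : ∀ w : EuclideanSpace ℂ (Fin n), ((U.orthogonalProjectionOnto w : EuclideanSpace ℂ (Fin n)))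
      = ∑ k ∈ s, (inner ℂ (e k) w : ℂ) • (e k : EuclideanSpace ℂ (Fin n)) := by
    intro w
    rw [← Submodule.starProjection_apply]
    apply Submodule.eq_starProjection_of_mem_of_inner_eq_zero
    · exact Submodule.sum_mem _ fun k hk => Submodule.smul_mem _ _ (hmemU k hk)
    · intro x hx
      rw [hU] at hx
      induction hx using Submodule.span_induction with
      | mem y hy =>
        obtain ⟨k, hk, rfl⟩ := hy
        rw [inner_sub_left, sum_inner]
        have : ∀ l ∈ s, (inner ℂ ((inner ℂ (e l) w : ℂ) • (e l : EuclideanSpace ℂ (Fin n))) (e k) : ℂ)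
            = if l = k then inner ℂ w (e k) else 0 := by
          intro l _
          rw [inner_smul_left, hite l k]
          split
          · next h => subst h; rw [mul_one, inner_conj_symm]
          · rw [mul_zero]
        rw [Finset.sum_congr rfl this, Finset.sum_ite_eq' s k _]
        have hks : k ∈ s := Finset.mem_filter.mpr ⟨Finset.mem_univ _, hk⟩
        simp [hks]
      | zero => simp
      | add y z _ _ hy hz => rw [inner_add_right, hy, hz, add_zero]
      | smul c y _ hy => rw [inner_smul_right, hy, mul_zero]
  -- residual formula
  have hres : ∀ w : EuclideanSpace ℂ (Fin n), w - ((U.orthogonalProjectionOnto w : EuclideanSpace ℂ (Fin n)))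
      = ∑ k ∈ sᶜ, (inner ℂ (e k) w : ℂ) • (e k : EuclideanSpace ℂ (Fin n)) := by
    intro w
    rw [hproj w, eq_comm, eq_sub_iff_add_eq, add_comm,
      Finset.sum_add_sum_compl s (fun k => (inner ℂ (e k) w : ℂ) • (e k : EuclideanSpace ℂ (Fin n)))]
    exact e.sum_repr' w
  -- norms of orthonormal combinations
  have hnorm : ∀ (t : Finset (Fin n)) (a : Fin n → ℂ),
      ‖∑ k ∈ t, a k • (e k : EuclideanSpace ℂ (Fin n))‖ ^ 2 = ∑ k ∈ t, ‖a k‖ ^ 2 := by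
    intro t a
    have h1 : (inner ℂ (∑ k ∈ t, a k • (e k : EuclideanSpace ℂ (Fin n)))
          (∑ k ∈ t, a k • (e k : EuclideanSpace ℂ (Fin n))) : ℂ)
        = ∑ k ∈ t, ((‖a k‖ : ℂ)) ^ 2 := by
      rw [horth.inner_sum a a t]
      exact Finset.sum_congr rfl fun k _ => by rw [RCLike.conj_mul]; norm_num
    rw [← inner_self_eq_norm_sq (𝕜 := ℂ), h1]
    simp [RCLike.re_to_complex, Complex.re_sum, ← Complex.ofReal_pow]
  -- notation
  set w : EuclideanSpace ℂ (Fin n) := Matrix.toEuclideanLin (fA ^ j) v with hw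
  set c : Fin n → ℂ := fun k => inner ℂ (e k) v with hc
  set a : ℝ := |μ ⟨m₀, hm⟩| with ha
  set b : ℝ := |μ ⟨m₀ - 1, by omega⟩| with hb
  have hbpos : 0 < b := lt_of_le_of_lt (abs_nonneg _) hgap
  have hcoef : ∀ k : Fin n, (inner ℂ (e k) w : ℂ) = (μ k : ℂ) ^ j * c k := by
    intro k
    rw [hw, hpow j v]
    exact horth.inner_right_fintype (fun l => (μ l : ℂ) ^ j * inner ℂ (e l) v) k
  have hnormcoef : ∀ k : Fin n, ‖(inner ℂ (e k) w : ℂ)‖ ^ 2 = (|μ k| ^ j) ^ 2 * ‖c k‖ ^ 2 := by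
    intro k
    rw [hcoef k, norm_mul, norm_pow, Complex.norm_real, Real.norm_eq_abs, mul_pow]
  -- bounds on eigenvalue magnitudes
  have hout : ∀ k ∈ sᶜ, |μ k| ≤ a := by
    intro k hk
    refine hord ⟨m₀, hm⟩ k ?_
    rw [Fin.le_def]
    simp only [hs, Finset.mem_compl, Finset.mem_filter, Finset.mem_univ, true_and,
      not_lt] at hk
    exact hk
  have hin : ∀ k ∈ s, b ≤ |μ k| := by
    intro k hk
    refine hord k ⟨m₀ - 1, by omega⟩ ?_
    rw [Fin.le_def]
    simp only [hs, Finset.mem_filter, Finset.mem_univ, true_and] at hk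
    show (k : ℕ) ≤ m₀ - 1
    omega
  -- squared-norm inequalities
  have h1sq : ‖w - ((U.orthogonalProjectionOnto w : EuclideanSpace ℂ (Fin n)))‖ ^ 2
      ≤ (a ^ j * ‖v - ((U.orthogonalProjectionOnto v : EuclideanSpace ℂ (Fin n)))‖) ^ 2 := by
    rw [hres w, hres v, hnorm sᶜ (fun k => inner ℂ (e k) w), mul_pow,
      hnorm sᶜ c, Finset.mul_sum]
    refine Finset.sum_le_sum fun k hk => ?_
    rw [hnormcoef k]
    have h0 : 0 ≤ ‖c k‖ ^ 2 := by positivity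
    have : (|μ k| ^ j) ^ 2 ≤ (a ^ j) ^ 2 := by
      have := hout k hk
      have h2 : |μ k| ^ j ≤ a ^ j := pow_le_pow_left₀ (abs_nonneg _) this j
      nlinarith [pow_nonneg (abs_nonneg (μ k)) j]
    nlinarith
  have h2sq : (b ^ j * ‖((U.orthogonalProjectionOnto v : EuclideanSpace ℂ (Fin n)))‖) ^ 2
      ≤ ‖((U.orthogonalProjectionOnto w : EuclideanSpace ℂ (Fin n)))‖ ^ 2 := by
    rw [hproj w, hproj v, hnorm s (fun k => inner ℂ (e k) w), mul_pow,
      hnorm s c, Finset.mul_sum]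
    refine Finset.sum_le_sum fun k hk => ?_
    rw [hnormcoef k]
    have h0 : 0 ≤ ‖c k‖ ^ 2 := by positivity
    have : (b ^ j) ^ 2 ≤ (|μ k| ^ j) ^ 2 := by
      have := hin k hk
      have h2 : b ^ j ≤ |μ k| ^ j := pow_le_pow_left₀ (le_of_lt hbpos) this j
      nlinarith [pow_nonneg (le_of_lt hbpos) j]
    nlinarith
  have h1 : ‖w - ((U.orthogonalProjectionOnto w : EuclideanSpace ℂ (Fin n)))‖
      ≤ a ^ j * ‖v - ((U.orthogonalProjectionOnto v : EuclideanSpace ℂ (Fin n)))‖ := by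
    have := Real.sqrt_le_sqrt h1sq
    rwa [Real.sqrt_sq (norm_nonneg _), Real.sqrt_sq (by positivity)] at this
  have h2 : b ^ j * ‖((U.orthogonalProjectionOnto v : EuclideanSpace ℂ (Fin n)))‖
      ≤ ‖((U.orthogonalProjectionOnto w : EuclideanSpace ℂ (Fin n)))‖ := by
    have := Real.sqrt_le_sqrt h2sq
    rwa [Real.sqrt_sq (by positivity), Real.sqrt_sq (norm_nonneg _)] at this
  rw [div_pow, div_mul_eq_mul_div, le_div_iff₀ (pow_pos hbpos j)]
  nlinarith [mul_le_mul h1 h2 (by positivity) (by positivity),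
    norm_nonneg (w - ((U.orthogonalProjectionOnto w : EuclideanSpace ℂ (Fin n)))),
    norm_nonneg ((U.orthogonalProjectionOnto v : EuclideanSpace ℂ (Fin n)))]
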